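/- For the DGT iterates: if the step-size satisfies 0 < α ≤ 2/(μ + L), then for every time k ∈ ℕ, √n·‖x̄^{k+1} − x̃^{(k+1)*}‖ ≤ (1 − αμ/2)·√n·‖x̄^k − x̃^{k*}‖ + αL·(Σ_{i=1}^n ‖x_i^k − x̄^k‖²)^{1/2} + √n·Δ_x. -/

import Mathlib

open Finset Filter

variable {E : Type*} [NormedAddCommGroup E] [InnerProductSpace ℝ E] [CompleteSpace E]

local notation "⟪" a ", " b "⟫" => (inner ℝ a b : ℝ)

/-- derivative of t ↦ f (x + t • u) -/
lemma line_hasDerivAt {f : E → ℝ} {g : E → E} (hg : ∀ z, HasGradientAt f (g z) z)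
    (x u : E) (t : ℝ) :
    HasDerivAt (fun t : ℝ => f (x + t • u)) ⟪g (x + t • u), u⟫ t := by
  have hline : HasDerivAt (fun t : ℝ => x + t • u) u t := by
    simpa using ((hasDerivAt_id t).smul_const u).const_add x
  have := ((hg (x + t • u)).hasFDerivAt).comp_hasDerivAt t hline
  simp [InnerProductSpace.toDual_apply_apply] at this
  exact this

/-- descent lemma -/
lemma upper_bound {f : E → ℝ} {g : E → E} {L : ℝ} (hL : 0 ≤ L)
    (hg : ∀ z, HasGradientAt f (g z) z)
    (hlip : ∀ a b, ‖g a - g b‖ ≤ L * ‖a - b‖) (x y : E) :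
    f y ≤ f x + ⟪g x, y - x⟫ + L / 2 * ‖y - x‖ ^ 2 := by
  set u := y - x with hu
  set χ : ℝ → ℝ := fun t => f (x + t • u) - t * ⟪g x, u⟫ - L * t ^ 2 / 2 * ‖u‖ ^ 2 with hχ
  have hχd : ∀ t : ℝ, HasDerivAt χ (⟪g (x + t • u), u⟫ - ⟪g x, u⟫ - L * t * ‖u‖ ^ 2) t := by
    intro t
    have h1 := line_hasDerivAt hg x u t
    have h2 : HasDerivAt (fun t : ℝ => t * ⟪g x, u⟫) ⟪g x, u⟫ t := by
      simpa using (hasDerivAt_id t).mul_const ⟪g x, u⟫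
    have h3 : HasDerivAt (fun t : ℝ => L * t ^ 2 / 2 * ‖u‖ ^ 2) (L * t * ‖u‖ ^ 2) t := by
      have : HasDerivAt (fun t : ℝ => L * t ^ 2 / 2 * ‖u‖ ^ 2) (L * ((2:ℕ) * t ^ (2-1)) / 2 * ‖u‖ ^ 2) t :=
        (((hasDerivAt_pow 2 t).const_mul L).div_const 2).mul_const _
      convert this using 1; ring
    exact (h1.sub h2).sub h3
  have hanti : AntitoneOn χ (Set.Icc (0:ℝ) 1) := by
    apply antitoneOn_of_hasDerivWithinAt_nonpos (convex_Icc 0 1)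
      (fun t _ => (hχd t).continuousAt.continuousWithinAt)
      (f' := fun t => ⟪g (x + t • u), u⟫ - ⟪g x, u⟫ - L * t * ‖u‖ ^ 2)
      (fun t _ => (hχd t).hasDerivWithinAt)
    intro t ht
    rw [interior_Icc] at ht
    have hcs : ⟪g (x + t • u), u⟫ - ⟪g x, u⟫ ≤ L * t * ‖u‖ ^ 2 := by
      have h1 : ⟪g (x + t • u) - g x, u⟫ ≤ ‖g (x + t • u) - g x‖ * ‖u‖ :=
        real_inner_le_norm _ _
      have h2 : ‖g (x + t • u) - g x‖ ≤ L * ‖t • u‖ := by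
        simpa using hlip (x + t • u) x
      have h3 : ‖t • u‖ = t * ‖u‖ := by
        rw [norm_smul, Real.norm_eq_abs, abs_of_pos ht.1]
      rw [inner_sub_left] at h1
      have h4 := mul_le_mul_of_nonneg_right h2 (norm_nonneg u)
      rw [h3] at h4
      nlinarith [norm_nonneg u]
    linarith
  have := hanti (Set.left_mem_Icc.2 zero_le_one) (Set.right_mem_Icc.2 zero_le_one) zero_le_one
  simp only [hχ] at this
  simp only [zero_smul, add_zero, one_smul, zero_mul, sub_zero, one_pow, mul_one] at this
  have hxy : x + u = y := by rw [hu]; abel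
  rw [hxy] at this
  linarith

/-- strong convexity lower bound -/
lemma lower_bound {f : E → ℝ} {g : E → E} {μ : ℝ}
    (hg : ∀ z, HasGradientAt f (g z) z)
    (hmono : ∀ a b, ⟪g a - g b, a - b⟫ ≥ μ * ‖a - b‖ ^ 2) (x y : E) :
    f y ≥ f x + ⟪g x, y - x⟫ + μ / 2 * ‖y - x‖ ^ 2 := by
  set u := y - x with hu
  set ω : ℝ → ℝ := fun t => f (x + t • u) - t * ⟪g x, u⟫ - μ * t ^ 2 / 2 * ‖u‖ ^ 2 with hω
  have hωd : ∀ t : ℝ, HasDerivAt ω (⟪g (x + t • u), u⟫ - ⟪g x, u⟫ - μ * t * ‖u‖ ^ 2) t := by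
    intro t
    have h1 := line_hasDerivAt hg x u t
    have h2 : HasDerivAt (fun t : ℝ => t * ⟪g x, u⟫) ⟪g x, u⟫ t := by
      simpa using (hasDerivAt_id t).mul_const ⟪g x, u⟫
    have h3 : HasDerivAt (fun t : ℝ => μ * t ^ 2 / 2 * ‖u‖ ^ 2) (μ * t * ‖u‖ ^ 2) t := by
      have : HasDerivAt (fun t : ℝ => μ * t ^ 2 / 2 * ‖u‖ ^ 2) (μ * ((2:ℕ) * t ^ (2-1)) / 2 * ‖u‖ ^ 2) t :=
        (((hasDerivAt_pow 2 t).const_mul μ).div_const 2).mul_const _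
      convert this using 1; ring
    exact (h1.sub h2).sub h3
  have hmonoOn : MonotoneOn ω (Set.Icc (0:ℝ) 1) := by
    apply monotoneOn_of_hasDerivWithinAt_nonneg (convex_Icc 0 1)
      (fun t _ => (hωd t).continuousAt.continuousWithinAt)
      (f' := fun t => ⟪g (x + t • u), u⟫ - ⟪g x, u⟫ - μ * t * ‖u‖ ^ 2)
      (fun t _ => (hωd t).hasDerivWithinAt)
    intro t ht
    rw [interior_Icc] at ht
    have key := hmono (x + t • u) x
    have hsub : (x + t • u) - x = t • u := by abel
    rw [hsub] at key
    have hn : ‖t • u‖ ^ 2 = t ^ 2 * ‖u‖ ^ 2 := by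
      rw [norm_smul, Real.norm_eq_abs, mul_pow, sq_abs]
    rw [inner_sub_left, real_inner_smul_right, real_inner_smul_right, hn] at key
    -- key : t * ⟪g (x+t•u), u⟫ - t * ⟪g x, u⟫ ≥ μ * (t^2 * ‖u‖^2)
    have ht0 : 0 < t := ht.1
    nlinarith [key]
  have := hmonoOn (Set.left_mem_Icc.2 zero_le_one) (Set.right_mem_Icc.2 zero_le_one) zero_le_one
  simp only [hω] at this
  simp only [zero_smul, add_zero, one_smul, zero_mul, sub_zero, one_pow, mul_one] at this
  have hxy : x + u = y := by rw [hu]; abel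
  rw [hxy] at this
  linarith

/-- cocoercivity from convexity + quadratic upper bound (pure algebra) -/
lemma cocoercive {F : E → ℝ} {G : E → E} {c : ℝ} (hc : 0 < c)
    (hlow : ∀ a b, F b ≥ F a + ⟪G a, b - a⟫)
    (hup : ∀ a b, F b ≤ F a + ⟪G a, b - a⟫ + c / 2 * ‖b - a‖ ^ 2) (x y : E) :
    c * ⟪G x - G y, x - y⟫ ≥ ‖G x - G y‖ ^ 2 := by
  have key : ∀ a b : E, F b ≥ F a + ⟪G a, b - a⟫ + 1 / (2 * c) * ‖G b - G a‖ ^ 2 := by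
    intro a b
    set z := b - c⁻¹ • (G b - G a) with hz
    have h1 := hlow a z
    have h2 := hup b z
    have hzb : z - b = -(c⁻¹ • (G b - G a)) := by rw [hz]; abel
    have hnorm : ‖z - b‖ ^ 2 = c⁻¹ ^ 2 * ‖G b - G a‖ ^ 2 := by
      rw [hzb, norm_neg, norm_smul, Real.norm_eq_abs, abs_of_pos (inv_pos.2 hc), mul_pow]
    have hza : ⟪G a, z - a⟫ = ⟪G a, b - a⟫ + ⟪G a, z - b⟫ := by
      rw [← inner_add_right]; congr 1; abel
    have hGbz : ⟪G b, z - b⟫ = -(c⁻¹ * ⟪G b, G b - G a⟫) := by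
      rw [hzb, inner_neg_right, real_inner_smul_right]
    have hGaz : ⟪G a, z - b⟫ = -(c⁻¹ * ⟪G a, G b - G a⟫) := by
      rw [hzb, inner_neg_right, real_inner_smul_right]
    have hdiff : ⟪G b, G b - G a⟫ - ⟪G a, G b - G a⟫ = ‖G b - G a‖ ^ 2 := by
      rw [← inner_sub_left, real_inner_self_eq_norm_sq]
    rw [hza, hGaz] at h1
    rw [hGbz, hnorm] at h2
    have e1 : c / 2 * (c⁻¹ ^ 2 * ‖G b - G a‖ ^ 2) = c⁻¹ / 2 * ‖G b - G a‖ ^ 2 := by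
      field_simp
    have e2 : (1:ℝ) / (2 * c) = c⁻¹ / 2 := by field_simp
    have e3 : c⁻¹ * ⟪G b, G b - G a⟫ - c⁻¹ * ⟪G a, G b - G a⟫ = c⁻¹ * ‖G b - G a‖ ^ 2 := by
      rw [← mul_sub, hdiff]
    rw [e1] at h2
    rw [e2]
    linarith
  have k1 := key x y
  have k2 := key y x
  have hxy : ⟪G y, x - y⟫ = -⟪G y, y - x⟫ := by rw [← inner_neg_right]; congr 1; abel
  have hsub : ⟪G x - G y, x - y⟫ = ⟪G x, x - y⟫ - ⟪G y, x - y⟫ := inner_sub_left _ _ _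
  have hsub2 : ⟪G x, y - x⟫ = -⟪G x, x - y⟫ := by rw [← inner_neg_right]; congr 1; abel
  have hnn : ‖G y - G x‖ = ‖G x - G y‖ := norm_sub_rev _ _
  rw [hnn] at k1
  rw [hsub2] at k1
  rw [hxy] at k2
  have hS : ⟪G x, x - y⟫ + ⟪G y, y - x⟫ ≥ 2 * (1 / (2 * c)) * ‖G x - G y‖ ^ 2 := by
    linarith
  have e : c * (2 * (1 / (2 * c))) = 1 := by field_simp
  have := mul_le_mul_of_nonneg_left hS hc.le
  rw [hsub, hxy]
  nlinarith [this, e, sq_nonneg ‖G x - G y‖]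

/-- key per-agent inequality (Nesterov) -/
lemma key_ineq {f : E → ℝ} {g : E → E} {μ L : ℝ} (hμ : 0 < μ) (hμL : μ ≤ L)
    (hg : ∀ z, HasGradientAt f (g z) z)
    (hmono : ∀ a b, ⟪g a - g b, a - b⟫ ≥ μ * ‖a - b‖ ^ 2)
    (hlip : ∀ a b, ‖g a - g b‖ ≤ L * ‖a - b‖) (x y : E) :
    (μ + L) * ⟪g x - g y, x - y⟫ ≥ ‖g x - g y‖ ^ 2 + μ * L * ‖x - y‖ ^ 2 := by
  rcases eq_or_lt_of_le hμL with heq | hlt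
  · -- μ = L : ‖g x - g y - μ(x-y)‖² ≤ 0 forces equality
    subst heq
    have h1 := hmono x y
    have h2 := hlip x y
    have hexp : ‖(g x - g y) - μ • (x - y)‖ ^ 2
        = ‖g x - g y‖ ^ 2 - 2 * (μ * ⟪g x - g y, x - y⟫) + μ ^ 2 * ‖x - y‖ ^ 2 := by
      rw [norm_sub_sq_real, real_inner_smul_right, norm_smul, Real.norm_eq_abs,
        abs_of_pos hμ, mul_pow]
    have hns : (0:ℝ) ≤ ‖(g x - g y) - μ • (x - y)‖ ^ 2 := sq_nonneg _
    nlinarith [sq_nonneg (‖g x - g y‖ - μ * ‖x - y‖), norm_nonneg (g x - g y), norm_nonneg (x - y),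
      mul_self_le_mul_self (norm_nonneg (g x - g y)) h2]
  · -- μ < L : apply cocoercivity to F = f - μ/2 ‖·‖², G = g - μ • id
    set c := L - μ with hc
    have hc0 : 0 < c := sub_pos.2 hlt
    set F : E → ℝ := fun z => f z - μ / 2 * ‖z‖ ^ 2 with hF
    set G : E → E := fun z => g z - μ • z with hG
    have hid : ∀ a b : E, ‖b‖ ^ 2 = ‖a‖ ^ 2 + 2 * ⟪a, b - a⟫ + ‖b - a‖ ^ 2 := by
      intro a b
      have : b = a + (b - a) := by abel
      calc ‖b‖ ^ 2 = ‖a + (b - a)‖ ^ 2 := by rw [← this]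
        _ = ‖a‖ ^ 2 + 2 * ⟪a, b - a⟫ + ‖b - a‖ ^ 2 := by
            rw [norm_add_sq_real]
    have hGinner : ∀ a b : E, ⟪G a, b - a⟫ = ⟪g a, b - a⟫ - μ * ⟪a, b - a⟫ := by
      intro a b
      rw [hG]; simp only [inner_sub_left, real_inner_smul_left]
    have hlow : ∀ a b, F b ≥ F a + ⟪G a, b - a⟫ := by
      intro a b
      have h := lower_bound hg hmono a b
      have := hid a b
      rw [hF]; simp only
      rw [hGinner]
      nlinarith [h]
    have hup : ∀ a b, F b ≤ F a + ⟪G a, b - a⟫ + c / 2 * ‖b - a‖ ^ 2 := by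
      intro a b
      have h := upper_bound (le_trans hμ.le hμL) hg hlip a b
      have := hid a b
      rw [hF]; simp only
      rw [hGinner, hc]
      nlinarith [h]
    have hco := cocoercive hc0 hlow hup x y
    have hGxy : G x - G y = (g x - g y) - μ • (x - y) := by
      rw [hG]; simp only; rw [smul_sub]; abel
    rw [hGxy] at hco
    have hexp : ‖(g x - g y) - μ • (x - y)‖ ^ 2
        = ‖g x - g y‖ ^ 2 - 2 * (μ * ⟪g x - g y, x - y⟫) + μ ^ 2 * ‖x - y‖ ^ 2 := by
      rw [norm_sub_sq_real, real_inner_smul_right, norm_smul, Real.norm_eq_abs,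
        abs_of_pos hμ, mul_pow]
    have hinner : ⟪(g x - g y) - μ • (x - y), x - y⟫
        = ⟪g x - g y, x - y⟫ - μ * ‖x - y‖ ^ 2 := by
      rw [inner_sub_left, real_inner_smul_left, real_inner_self_eq_norm_sq]
    rw [hexp, hinner, hc] at hco
    nlinarith [hco]

lemma norm_sum_sq_le {ι : Type*} [Fintype ι] (v : ι → E) :
    ‖∑ i, v i‖ ^ 2 ≤ (Fintype.card ι : ℝ) * ∑ i, ‖v i‖ ^ 2 := by
  have h1 : ‖∑ i, v i‖ ^ 2 ≤ (∑ i, ‖v i‖) ^ 2 := by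
    apply pow_le_pow_left₀ (norm_nonneg _) (norm_sum_le _ _)
  have h2 : (∑ i, ‖v i‖) ^ 2 ≤ (Fintype.card ι : ℝ) * ∑ i, ‖v i‖ ^ 2 := by
    have := sq_sum_le_card_mul_sum_sq (s := (Finset.univ : Finset ι)) (f := fun i => ‖v i‖)
    simpa [Finset.card_univ] using this
  linarith

set_option maxHeartbeats 1000000

theorem dgt_average_descent
    (n d : ℕ) (hn : 1 ≤ n) (hd : 1 ≤ d)
    (μ L : ℝ) (hμ : 0 < μ) (hμL : μ ≤ L)
    (f : ℕ → Fin n → EuclideanSpace ℝ (Fin d) → ℝ)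
    (g : ℕ → Fin n → EuclideanSpace ℝ (Fin d) → EuclideanSpace ℝ (Fin d))
    (hgrad : ∀ k i x, HasGradientAt (f k i) (g k i x) x)
    (hsc : ∀ k i x y, (inner ℝ (g k i x - g k i y) (x - y) : ℝ) ≥ μ * ‖x - y‖ ^ 2)
    (hsm : ∀ k i x y, ‖g k i x - g k i y‖ ≤ L * ‖x - y‖)
    (xstar : ℕ → EuclideanSpace ℝ (Fin d))
    (hopt : ∀ k, ∑ i, g k i (xstar k) = 0)
    (Δx : ℝ) (hΔx : 0 < Δx)
    (hdrift : ∀ k, ‖xstar (k + 1) - xstar k‖ ≤ Δx)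
    (W : Fin n → Fin n → ℝ)
    (hWnonneg : ∀ i j, 0 ≤ W i j)
    (hWrow : ∀ i, ∑ j, W i j = 1)
    (hWcol : ∀ j, ∑ i, W i j = 1)
    (β : ℝ) (hβ0 : 0 ≤ β) (hβ1 : β < 1)
    (hβ : ∀ v : Fin n → EuclideanSpace ℝ (Fin d), (∑ i, v i) = 0 →
      Real.sqrt (∑ i, ‖∑ j, W i j • v j‖ ^ 2) ≤ β * Real.sqrt (∑ i, ‖v i‖ ^ 2))
    (α : ℝ) (hα0 : 0 < α) (hα : α ≤ 2 / (μ + L))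
    (x y : ℕ → Fin n → EuclideanSpace ℝ (Fin d))
    (hy0 : ∀ i, y 0 i = g 0 i (x 0 i))
    (hx : ∀ k i, x (k + 1) i = ∑ j, W i j • (x k j - α • y k j))
    (hy : ∀ k i, y (k + 1) i =
      (∑ j, W i j • y k j) + g (k + 1) i (x (k + 1) i) - g k i (x k i))
    (xbar : ℕ → EuclideanSpace ℝ (Fin d))
    (hxbar : ∀ k, xbar k = (n : ℝ)⁻¹ • ∑ i, x k i)
    (k : ℕ) :
    Real.sqrt n * ‖xbar (k + 1) - xstar (k + 1)‖ ≤
      (1 - α * μ / 2) * (Real.sqrt n * ‖xbar k - xstar k‖)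
      + α * L * Real.sqrt (∑ i, ‖x k i - xbar k‖ ^ 2)
      + Real.sqrt n * Δx := by
  have hn0 : (0:ℝ) < n := by exact_mod_cast hn
  have hnn : (0:ℝ) ≤ n := hn0.le
  have hL0 : (0:ℝ) < L := lt_of_lt_of_le hμ hμL
  set a : ℝ := (n:ℝ)⁻¹ with ha
  have ha0 : 0 < a := inv_pos.2 hn0
  have han : a * n = 1 := inv_mul_cancel₀ hn0.ne'
  have hc0 : (0:ℝ) < μ + L := by linarith
  have hαc : α * (μ + L) ≤ 2 := (le_div_iff₀ hc0).mp hα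
  have hαμ : α * μ ≤ 1 := by nlinarith
  -- double stochasticity collapse
  have hcol : ∀ v : Fin n → EuclideanSpace ℝ (Fin d),
      ∑ i, ∑ j, W i j • v j = ∑ j, v j := by
    intro v
    rw [Finset.sum_comm]
    refine Finset.sum_congr rfl fun j _ => ?_
    rw [← Finset.sum_smul, hWcol, one_smul]
  -- gradient tracking sum invariant
  have hysum : ∀ m, ∑ i, y m i = ∑ i, g m i (x m i) := by
    intro m
    induction m with
    | zero => exact Finset.sum_congr rfl fun i _ => hy0 i
    | succ m ih =>
      have h : ∑ i, y (m+1) i =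
          (∑ i, ∑ j, W i j • y m j) + ((∑ i, g (m+1) i (x (m+1) i)) - ∑ i, g m i (x m i)) := by
        rw [← Finset.sum_sub_distrib, ← Finset.sum_add_distrib]
        exact Finset.sum_congr rfl fun i _ => by rw [hy m i]; abel
      rw [h, hcol, ih]
      abel
  -- average dynamics
  have hstep : xbar (k+1) = xbar k - (α * a) • ∑ i, g k i (x k i) := by
    have h1 : ∑ i, x (k+1) i = (∑ j, x k j) - α • ∑ j, y k j := by
      calc ∑ i, x (k+1) i = ∑ i, ∑ j, W i j • (x k j - α • y k j) :=
            Finset.sum_congr rfl fun i _ => hx k i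
        _ = ∑ j, (x k j - α • y k j) := hcol _
        _ = (∑ j, x k j) - α • ∑ j, y k j := by
            rw [Finset.sum_sub_distrib, Finset.smul_sum]
    rw [hxbar (k+1), hxbar k, h1, hysum k, smul_sub, smul_smul]
    rw [mul_comm ((n:ℝ)⁻¹) α, ← ha]
  set v := xbar k - xstar k with hv
  set S := ∑ i, (g k i (xbar k) - g k i (xstar k)) with hS
  set w := a • S with hw
  set u := ∑ i, (g k i (xbar k) - g k i (x k i)) with hu
  have hdecomp : xbar (k+1) - xstar (k+1) =
      (v - α • w) + (α * a) • u + (xstar k - xstar (k+1)) := by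
    rw [hstep]
    have h2 : S = ∑ i, g k i (xbar k) := by
      rw [hS, Finset.sum_sub_distrib, hopt k, sub_zero]
    have h3 : u = (∑ i, g k i (xbar k)) - ∑ i, g k i (x k i) := by
      rw [hu, Finset.sum_sub_distrib]
    rw [hv, hw, h2, h3]
    module
  -- key inequality per agent, summed
  have hkey : ∀ i : Fin n, (μ + L) * ⟪g k i (xbar k) - g k i (xstar k), v⟫ ≥
      ‖g k i (xbar k) - g k i (xstar k)‖ ^ 2 + μ * L * ‖v‖ ^ 2 := by
    intro i
    have := key_ineq hμ hμL (hgrad k i) (hsc k i) (hsm k i) (xbar k) (xstar k)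
    rw [← hv] at this
    exact this
  have hsum1 : (μ+L) * ⟪S, v⟫ ≥
      (∑ i, ‖g k i (xbar k) - g k i (xstar k)‖ ^ 2) + (n:ℝ) * (μ * L * ‖v‖ ^ 2) := by
    rw [hS, sum_inner, Finset.mul_sum]
    have h := Finset.sum_le_sum (fun i (_ : i ∈ Finset.univ) => hkey i)
    rw [Finset.sum_add_distrib, Finset.sum_const, Finset.card_univ, Fintype.card_fin,
      nsmul_eq_mul] at h
    exact h
  have hCS : ‖S‖ ^ 2 ≤ (n:ℝ) * ∑ i, ‖g k i (xbar k) - g k i (xstar k)‖ ^ 2 := by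
    have := norm_sum_sq_le (fun i => g k i (xbar k) - g k i (xstar k))
    simpa [← hS, Fintype.card_fin] using this
  have hsum0 : (0:ℝ) ≤ ∑ i, ‖g k i (xbar k) - g k i (xstar k)‖ ^ 2 :=
    Finset.sum_nonneg fun i _ => sq_nonneg _
  have hI : (μ+L) * ⟪S, v⟫ ≥ a * ‖S‖ ^ 2 + (n:ℝ) * (μ * L * ‖v‖ ^ 2) := by
    have haS : a * ((n:ℝ) * ∑ i, ‖g k i (xbar k) - g k i (xstar k)‖ ^ 2)
        = ∑ i, ‖g k i (xbar k) - g k i (xstar k)‖ ^ 2 := by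
      rw [← mul_assoc, han, one_mul]
    have := mul_le_mul_of_nonneg_left hCS ha0.le
    rw [haS] at this
    linarith
  -- squared contraction
  have hq : ‖v - α • w‖ ^ 2 ≤ (1 - α*μ/2) ^ 2 * ‖v‖ ^ 2 := by
    have hexp : ‖v - α • w‖ ^ 2 = ‖v‖ ^ 2 - 2*α*a*⟪S, v⟫ + α^2*a^2*‖S‖ ^ 2 := by
      rw [norm_sub_sq_real, hw, real_inner_smul_right, real_inner_smul_right,
        norm_smul, norm_smul, Real.norm_eq_abs, Real.norm_eq_abs, mul_pow, mul_pow,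
        sq_abs, sq_abs, real_inner_comm]
      ring
    have hgoal' : (μ+L) * ‖v - α • w‖ ^ 2 ≤ (μ+L) * ((1 - α*μ/2) ^ 2 * ‖v‖ ^ 2) := by
      rw [hexp]
      have h2 := mul_le_mul_of_nonneg_left hI (show (0:ℝ) ≤ 2*α*a by positivity)
      have e2 : 2*α*a*(a * ‖S‖ ^ 2 + (n:ℝ) * (μ * L * ‖v‖ ^ 2))
          = 2*α*(a*a)*‖S‖ ^ 2 + (a*(n:ℝ)) * (2*α*(μ*L*‖v‖ ^ 2)) := by ring
      rw [e2, han, one_mul] at h2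
      have hA : 0 ≤ α*((a*a)*‖S‖ ^ 2)*(2 - α*(μ+L)) := by
        apply mul_nonneg (mul_nonneg hα0.le (by positivity))
        linarith
      have hB : 0 ≤ α*μ*((L-μ) + (μ+L)*(α*μ)/4)*‖v‖ ^ 2 := by
        apply mul_nonneg
        apply mul_nonneg (mul_nonneg hα0.le hμ.le)
        · apply add_nonneg (by linarith)
          positivity
        · exact sq_nonneg _
      linarith [h2, hA, hB]
    exact le_of_mul_le_mul_left hgoal' hc0
  have hfac : (0:ℝ) ≤ 1 - α*μ/2 := by linarith
  have hcontr : ‖v - α • w‖ ≤ (1 - α*μ/2) * ‖v‖ := by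
    have h1 : ‖v - α • w‖ = Real.sqrt (‖v - α • w‖ ^ 2) := (Real.sqrt_sq (norm_nonneg _)).symm
    have h2 : Real.sqrt ((1 - α*μ/2) ^ 2 * ‖v‖ ^ 2) = (1 - α*μ/2) * ‖v‖ := by
      rw [← mul_pow, Real.sqrt_sq (by positivity)]
    rw [h1, ← h2]
    exact Real.sqrt_le_sqrt hq
  -- consensus term
  set Qs := Real.sqrt (∑ i, ‖x k i - xbar k‖ ^ 2) with hQs
  have hE2 : Real.sqrt n * ‖(α*a) • u‖ ≤ α * L * Qs := by
    have h1 : ‖u‖ ≤ L * ∑ i, ‖x k i - xbar k‖ := by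
      calc ‖u‖ ≤ ∑ i, ‖g k i (xbar k) - g k i (x k i)‖ := by
            rw [hu]; exact norm_sum_le _ _
        _ ≤ ∑ i, L * ‖xbar k - x k i‖ := Finset.sum_le_sum fun i _ => hsm k i _ _
        _ = L * ∑ i, ‖x k i - xbar k‖ := by
            rw [← Finset.mul_sum]
            congr 1
            exact Finset.sum_congr rfl fun i _ => norm_sub_rev _ _
    have h2 : ∑ i, ‖x k i - xbar k‖ ≤ Real.sqrt n * Qs := by
      have hsq : (∑ i, ‖x k i - xbar k‖) ^ 2 ≤ (n:ℝ) * ∑ i, ‖x k i - xbar k‖ ^ 2 := by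
        have := sq_sum_le_card_mul_sum_sq (s := (Finset.univ : Finset (Fin n)))
          (f := fun i => ‖x k i - xbar k‖)
        simpa [Finset.card_univ] using this
      calc ∑ i, ‖x k i - xbar k‖
          = Real.sqrt ((∑ i, ‖x k i - xbar k‖) ^ 2) := by
            rw [Real.sqrt_sq (Finset.sum_nonneg fun i _ => norm_nonneg _)]
        _ ≤ Real.sqrt ((n:ℝ) * ∑ i, ‖x k i - xbar k‖ ^ 2) := Real.sqrt_le_sqrt hsq
        _ = Real.sqrt n * Qs := Real.sqrt_mul hnn _
    have h3 : ‖(α*a) • u‖ = α * a * ‖u‖ := by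
      rw [norm_smul, Real.norm_eq_abs, abs_of_pos (by positivity)]
    have hsqn : Real.sqrt n * Real.sqrt n = n := Real.mul_self_sqrt hnn
    have h4 : ‖u‖ ≤ L * (Real.sqrt n * Qs) := le_trans h1 (by
      exact mul_le_mul_of_nonneg_left h2 hL0.le)
    rw [h3]
    calc Real.sqrt n * (α * a * ‖u‖)
        ≤ Real.sqrt n * (α * a * (L * (Real.sqrt n * Qs))) := by
          apply mul_le_mul_of_nonneg_left _ (Real.sqrt_nonneg _)
          exact mul_le_mul_of_nonneg_left h4 (by positivity)
      _ = (Real.sqrt n * Real.sqrt n) * (a * (α * L * Qs)) := by ring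
      _ = ((n:ℝ) * a) * (α * L * Qs) := by rw [hsqn]; ring
      _ = α * L * Qs := by rw [mul_comm (n:ℝ) a, han, one_mul]
  -- drift
  have hdr : ‖xstar k - xstar (k+1)‖ ≤ Δx := by
    rw [norm_sub_rev]; exact hdrift k
  -- combine
  have htri : ‖xbar (k+1) - xstar (k+1)‖ ≤
      ‖v - α • w‖ + ‖(α*a) • u‖ + ‖xstar k - xstar (k+1)‖ := by
    rw [hdecomp]
    exact norm_add₃_le
  calc Real.sqrt n * ‖xbar (k+1) - xstar (k+1)‖
      ≤ Real.sqrt n * (‖v - α • w‖ + ‖(α*a) • u‖ + ‖xstar k - xstar (k+1)‖) :=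
        mul_le_mul_of_nonneg_left htri (Real.sqrt_nonneg _)
    _ = Real.sqrt n * ‖v - α • w‖ + Real.sqrt n * ‖(α*a) • u‖
        + Real.sqrt n * ‖xstar k - xstar (k+1)‖ := by ring
    _ ≤ (1 - α*μ/2) * (Real.sqrt n * ‖v‖) + α * L * Qs + Real.sqrt n * Δx := by
        apply add_le_add (add_le_add ?_ hE2) ?_
        · calc Real.sqrt n * ‖v - α • w‖ ≤ Real.sqrt n * ((1 - α*μ/2) * ‖v‖) :=
              mul_le_mul_of_nonneg_left hcontr (Real.sqrt_nonneg _)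
            _ = (1 - α*μ/2) * (Real.sqrt n * ‖v‖) := by ring
        · exact mul_le_mul_of_nonneg_left hdr (Real.sqrt_nonneg _)
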